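/- arXiv:2404.13291 — 2 statements merged into one kernel-verified Lean document; each statement's English description precedes it below -/
import Mathlib

section
/- Let F be a pricing function with marginal-rate function G and let f>0 be the unit trading fee. Fix β>0. Then φ^A(α,β) → 0 and φ^B(α,β) → 0 as α decreases to G(β)(1+f) (through values α > G(β)(1+f)); and, for fixed α>0, φ^A(α,β) → 0 and φ^B(α,β) → 0 as β decreases to G⁻¹(α/(1+f)) (through values β > G⁻¹(α/(1+f))). In particular, extending φ^A and φ^B by the value 0 on the region {(α,β) : 1/(1+f) ≤ G(β)/α ≤ 1+f} yields functions continuous up to that part of the boundary of the region {G(β)/α < 1/(1+f)}. -/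
open Set Filter Topology

/-- A pricing function `F` with partial derivatives `Fx`, `Fy` and marginal-rate
function `G` (with derivative `G'`), as in Assumption 1 (Pricing Formula):
(i) `F` is continuously differentiable with positive partial derivatives;
(ii) `Fx/Fy = G(x/y)` where `G` is continuously differentiable, strictly
decreasing (negative derivative), with `G → ∞` at `0⁺` and `G → 0` at `∞`;
(iii) homogeneity of level sets. -/
structure PricingFunction (F Fx Fy : ℝ → ℝ → ℝ) (G G' : ℝ → ℝ) : Prop where
  partialX : ∀ x y : ℝ, 0 < x → 0 < y → HasDerivAt (fun t => F t y) (Fx x y) x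
  partialY : ∀ x y : ℝ, 0 < x → 0 < y → HasDerivAt (fun t => F x t) (Fy x y) y
  contX : ContinuousOn (fun p : ℝ × ℝ => Fx p.1 p.2) (Ioi 0 ×ˢ Ioi 0)
  contY : ContinuousOn (fun p : ℝ × ℝ => Fy p.1 p.2) (Ioi 0 ×ˢ Ioi 0)
  posX : ∀ x y : ℝ, 0 < x → 0 < y → 0 < Fx x y
  posY : ∀ x y : ℝ, 0 < x → 0 < y → 0 < Fy x y
  ratio : ∀ x y : ℝ, 0 < x → 0 < y → Fx x y / Fy x y = G (x / y)
  derivG : ∀ z : ℝ, 0 < z → HasDerivAt G (G' z) z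
  contG' : ContinuousOn G' (Ioi 0)
  negG' : ∀ z : ℝ, 0 < z → G' z < 0
  tendstoG0 : Tendsto G (𝓝[>] (0:ℝ)) atTop
  tendstoGtop : Tendsto G atTop (𝓝 0)
  homog : ∀ x y x' y' c : ℝ, 0 < x → 0 < y → 0 < x' → 0 < y' → 0 < c →
    F x y = F x' y' → F (c * x) (c * y) = F (c * x') (c * y')

section Aux

variable {F Fx Fy : ℝ → ℝ → ℝ} {G G' : ℝ → ℝ}

lemma G_strictAnti (hF : PricingFunction F Fx Fy G G') : StrictAntiOn G (Ioi 0) := by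
  apply strictAntiOn_of_deriv_neg (convex_Ioi 0)
  · exact fun z hz => ((hF.derivG z hz).continuousAt).continuousWithinAt
  · intro z hz
    rw [interior_Ioi] at hz
    rw [(hF.derivG z hz).deriv]
    exact hF.negG' z hz

lemma G_pos (hF : PricingFunction F Fx Fy G G') {z : ℝ} (hz : 0 < z) : 0 < G z := by
  have h1 : 0 ≤ G (z + 1) := by
    refine le_of_tendsto hF.tendstoGtop ?_
    filter_upwards [eventually_gt_atTop (z + 1)] with w hw
    exact le_of_lt (G_strictAnti hF (mem_Ioi.2 (by linarith)) (mem_Ioi.2 (by linarith)) hw)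
  have h2 : G (z + 1) < G z :=
    G_strictAnti hF (mem_Ioi.2 hz) (mem_Ioi.2 (by linarith)) (by linarith)
  linarith

lemma F_monoX (hF : PricingFunction F Fx Fy G G') {y : ℝ} (hy : 0 < y) :
    StrictMonoOn (fun t => F t y) (Ioi 0) := by
  apply strictMonoOn_of_deriv_pos (convex_Ioi 0)
  · exact fun x hx => ((hF.partialX x y hx hy).continuousAt).continuousWithinAt
  · intro x hx
    rw [interior_Ioi] at hx
    rw [(hF.partialX x y hx hy).deriv]
    exact hF.posX x y hx hy

lemma F_monoY (hF : PricingFunction F Fx Fy G G') {x : ℝ} (hx : 0 < x) :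
    StrictMonoOn (fun t => F x t) (Ioi 0) := by
  apply strictMonoOn_of_deriv_pos (convex_Ioi 0)
  · exact fun y hy => ((hF.partialY x y hx hy).continuousAt).continuousWithinAt
  · intro y hy
    rw [interior_Ioi] at hy
    rw [(hF.partialY x y hx hy).deriv]
    exact hF.posY x y hx hy

lemma Ginv_tendsto (hF : PricingFunction F Fx Fy G G') {Ginv : ℝ → ℝ}
    (hGinv : ∀ u : ℝ, 0 < u → 0 < Ginv u ∧ G (Ginv u) = u) {β : ℝ} (hβ : 0 < β) :
    Tendsto Ginv (𝓝[>] (G β)) (𝓝 β) := by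
  have hGβ : 0 < G β := G_pos hF hβ
  rw [tendsto_order]
  constructor
  · intro c hc
    set c' : ℝ := max c (β / 2) with hc'
    have hc'0 : 0 < c' := lt_of_lt_of_le (half_pos hβ) (le_max_right c (β / 2))
    have hc'β : c' < β := max_lt hc (by linarith)
    have hGc' : G β < G c' := G_strictAnti hF (mem_Ioi.2 hc'0) (mem_Ioi.2 hβ) hc'β
    have hmem : Iio (G c') ∈ 𝓝[>] (G β) :=
      nhdsWithin_le_nhds (Iio_mem_nhds hGc')
    filter_upwards [hmem, self_mem_nhdsWithin] with u hu1 hu2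
    have hu0 : 0 < u := lt_trans hGβ hu2
    obtain ⟨hGu0, hGu⟩ := hGinv u hu0
    have hlt : c' < Ginv u := by
      by_contra h
      push_neg at h
      have hle : G c' ≤ G (Ginv u) := by
        rcases eq_or_lt_of_le h with h | h
        · rw [h]
        · exact le_of_lt (G_strictAnti hF (mem_Ioi.2 hGu0) (mem_Ioi.2 hc'0) h)
      rw [hGu] at hle
      exact absurd (mem_Iio.1 hu1) (not_lt.2 hle)
    exact lt_of_le_of_lt (le_max_left c (β / 2)) hlt
  · intro c hc
    filter_upwards [self_mem_nhdsWithin] with u hu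
    have hu0 : 0 < u := lt_trans hGβ hu
    obtain ⟨hGu0, hGu⟩ := hGinv u hu0
    have hlt : Ginv u < β := by
      by_contra h
      push_neg at h
      have hle : G (Ginv u) ≤ G β := by
        rcases eq_or_lt_of_le h with h | h
        · rw [← h]
        · exact le_of_lt (G_strictAnti hF (mem_Ioi.2 hβ) (mem_Ioi.2 hGu0) h)
      rw [hGu] at hle
      exact absurd (mem_Ioi.1 hu) (not_lt.2 hle)
    exact lt_trans hlt hc

/-- Key squeeze bounds: `φA α β ≤ 1 - r` and `1 - r⁻¹ ≤ φB α β` where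
`r = Ginv (α/(1+f)) / β`. -/
lemma key_bounds (hF : PricingFunction F Fx Fy G G') {Ginv : ℝ → ℝ}
    (hGinv : ∀ u : ℝ, 0 < u → 0 < Ginv u ∧ G (Ginv u) = u)
    {f : ℝ} (hf : 0 < f) {φA φB : ℝ → ℝ → ℝ}
    (hφ : ∀ α β : ℝ, 0 < α → 0 < β → G β / α < 1 / (1 + f) →
      φA α β ∈ Ioo (0:ℝ) 1 ∧ φB α β < 0 ∧
      (1 - φA α β) / (1 - φB α β) = (1 / β) * Ginv (α / (1 + f)) ∧
      F (β * (1 - φA α β)) (1 - φB α β) = F β 1)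
    {α β : ℝ} (hα : 0 < α) (hβ : 0 < β) (hcond : G β / α < 1 / (1 + f)) :
    φA α β ≤ 1 - Ginv (α / (1 + f)) / β ∧
    1 - (Ginv (α / (1 + f)) / β)⁻¹ ≤ φB α β := by
  have hf1 : (0:ℝ) < 1 + f := by linarith
  have hu : 0 < α / (1 + f) := by positivity
  obtain ⟨hGu0, _⟩ := hGinv _ hu
  obtain ⟨hA, hB, hratio, hFeq⟩ := hφ α β hα hβ hcond
  set r : ℝ := Ginv (α / (1 + f)) / β with hr_def
  have hr0 : 0 < r := by positivity
  set a : ℝ := 1 - φA α β with ha_def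
  set b : ℝ := 1 - φB α β with hb_def
  have ha0 : 0 < a := by have := hA.2; simp only [ha_def]; linarith
  have ha1 : a < 1 := by have := hA.1; simp only [ha_def]; linarith
  have hb1 : 1 < b := by simp only [hb_def]; linarith
  have hb0 : 0 < b := by linarith
  have hab : a = r * b := by
    have : a / b = r := by
      rw [hratio, hr_def]; ring
    field_simp at this
    linarith [this]
  have hble : b ≤ r⁻¹ := by
    by_contra h
    push_neg at h
    have ha' : 1 < a := by
      rw [hab]
      calc (1:ℝ) = r * r⁻¹ := by rw [mul_inv_cancel₀ (ne_of_gt hr0)]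
      _ < r * b := by exact mul_lt_mul_of_pos_left h hr0
    have h1 : F β b < F (β * a) b :=
      F_monoX hF hb0 (mem_Ioi.2 hβ) (mem_Ioi.2 (by positivity)) (by nlinarith)
    have h2 : F β 1 < F β b :=
      F_monoY hF hβ (mem_Ioi.2 one_pos) (mem_Ioi.2 hb0) hb1
    linarith [hFeq.symm ▸ h1, hFeq]
  constructor
  · have : r < a := by nlinarith
    simp only [ha_def] at this; linarith
  · have : 1 - r⁻¹ ≤ 1 - b := by linarith
    simp only [hb_def] at this; linarith

end Aux

/-- Boundary limits of the optimal trading proportions: for fixed `β > 0`,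
`φᴬ(α,β) → 0` and `φᴮ(α,β) → 0` as `α ↓ G(β)(1+f)`; and for fixed `α > 0`,
`φᴬ(α,β) → 0` and `φᴮ(α,β) → 0` as `β ↓ G⁻¹(α/(1+f))`. -/
theorem stmt4 (F Fx Fy : ℝ → ℝ → ℝ) (G G' Ginv : ℝ → ℝ)
    (hF : PricingFunction F Fx Fy G G')
    (hGinv : ∀ u : ℝ, 0 < u → 0 < Ginv u ∧ G (Ginv u) = u)
    (f : ℝ) (hf : 0 < f)
    (φA φB : ℝ → ℝ → ℝ)
    (hφ : ∀ α β : ℝ, 0 < α → 0 < β → G β / α < 1 / (1 + f) →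
      φA α β ∈ Ioo (0:ℝ) 1 ∧ φB α β < 0 ∧
      (1 - φA α β) / (1 - φB α β) = (1 / β) * Ginv (α / (1 + f)) ∧
      F (β * (1 - φA α β)) (1 - φB α β) = F β 1)
    (β : ℝ) (hβ : 0 < β) (α : ℝ) (hα : 0 < α) :
    Tendsto (fun a => φA a β) (𝓝[>] (G β * (1 + f))) (𝓝 0) ∧
    Tendsto (fun a => φB a β) (𝓝[>] (G β * (1 + f))) (𝓝 0) ∧
    Tendsto (fun b => φA α b) (𝓝[>] (Ginv (α / (1 + f)))) (𝓝 0) ∧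
    Tendsto (fun b => φB α b) (𝓝[>] (Ginv (α / (1 + f)))) (𝓝 0) := by
  have hf1 : (0:ℝ) < 1 + f := by linarith
  have hGβ : 0 < G β := G_pos hF hβ
  -- Part 1: α variable
  have hmap : Tendsto (fun a : ℝ => a / (1 + f)) (𝓝[>] (G β * (1 + f))) (𝓝[>] (G β)) := by
    apply tendsto_nhdsWithin_of_tendsto_nhds_of_eventually_within
    · have h : Tendsto (fun a : ℝ => a / (1 + f)) (𝓝 (G β * (1 + f)))
          (𝓝 (G β * (1 + f) / (1 + f))) := (continuous_id.div_const _).tendsto _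
      rw [mul_div_cancel_right₀ _ (ne_of_gt hf1)] at h
      exact h.mono_left nhdsWithin_le_nhds
    · filter_upwards [self_mem_nhdsWithin] with a ha
      exact mem_Ioi.2 ((lt_div_iff₀ hf1).2 (by simpa using (mem_Ioi.1 ha)))
  have hGinvT : Tendsto (fun a : ℝ => Ginv (a / (1 + f))) (𝓝[>] (G β * (1 + f))) (𝓝 β) :=
    (Ginv_tendsto hF hGinv hβ).comp hmap
  have hr : Tendsto (fun a : ℝ => Ginv (a / (1 + f)) / β) (𝓝[>] (G β * (1 + f))) (𝓝 1) := by
    have := hGinvT.div_const β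
    rwa [div_self (ne_of_gt hβ)] at this
  have hrinv : Tendsto (fun a : ℝ => (Ginv (a / (1 + f)) / β)⁻¹)
      (𝓝[>] (G β * (1 + f))) (𝓝 1) := by
    have h := hr.inv₀ one_ne_zero
    rwa [inv_one] at h
  have hev1 : ∀ᶠ a in 𝓝[>] (G β * (1 + f)), 0 < a ∧ G β / a < 1 / (1 + f) := by
    filter_upwards [self_mem_nhdsWithin] with a ha
    have ha' : G β * (1 + f) < a := mem_Ioi.1 ha
    have ha0 : 0 < a := lt_trans (by positivity) ha'
    exact ⟨ha0, (div_lt_div_iff₀ ha0 hf1).2 (by linarith)⟩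
  have t1 : Tendsto (fun a => φA a β) (𝓝[>] (G β * (1 + f))) (𝓝 0) := by
    apply tendsto_of_tendsto_of_tendsto_of_le_of_le' tendsto_const_nhds
      (show Tendsto (fun a : ℝ => 1 - Ginv (a / (1 + f)) / β) _ (𝓝 0) by
        have h := Tendsto.const_sub (1:ℝ) hr
        have h0 : (1:ℝ) - 1 = 0 := by norm_num
        rw [h0] at h
        exact h)
    · filter_upwards [hev1] with a ha
      exact le_of_lt (hφ a β ha.1 hβ ha.2).1.1
    · filter_upwards [hev1] with a ha
      exact (key_bounds hF hGinv hf hφ ha.1 hβ ha.2).1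
  have t2 : Tendsto (fun a => φB a β) (𝓝[>] (G β * (1 + f))) (𝓝 0) := by
    apply tendsto_of_tendsto_of_tendsto_of_le_of_le'
      (show Tendsto (fun a : ℝ => 1 - (Ginv (a / (1 + f)) / β)⁻¹) _ (𝓝 0) by
        have h := Tendsto.const_sub (1:ℝ) hrinv
        have h0 : (1:ℝ) - 1 = 0 := by norm_num
        rw [h0] at h
        exact h)
      tendsto_const_nhds
    · filter_upwards [hev1] with a ha
      exact (key_bounds hF hGinv hf hφ ha.1 hβ ha.2).2
    · filter_upwards [hev1] with a ha
      exact le_of_lt (hφ a β ha.1 hβ ha.2).2.1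
  -- Part 2: β variable
  have hu : 0 < α / (1 + f) := by positivity
  obtain ⟨hβ₀, hGβ₀⟩ := hGinv _ hu
  set β₀ : ℝ := Ginv (α / (1 + f)) with hβ₀def
  have hid : Tendsto (fun b : ℝ => b) (𝓝[>] β₀) (𝓝 β₀) :=
    tendsto_id.mono_left nhdsWithin_le_nhds
  have hr' : Tendsto (fun b : ℝ => β₀ / b) (𝓝[>] β₀) (𝓝 1) := by
    have h : Tendsto (fun b : ℝ => β₀ / b) (𝓝[>] β₀) (𝓝 (β₀ / β₀)) :=
      (tendsto_const_nhds : Tendsto (fun _ : ℝ => β₀) (𝓝[>] β₀) (𝓝 β₀)).div hid (ne_of_gt hβ₀)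
    rwa [div_self (ne_of_gt hβ₀)] at h
  have hrinv' : Tendsto (fun b : ℝ => (β₀ / b)⁻¹) (𝓝[>] β₀) (𝓝 1) := by
    have h := hr'.inv₀ one_ne_zero
    rwa [inv_one] at h
  have hev2 : ∀ᶠ b in 𝓝[>] β₀, 0 < b ∧ G b / α < 1 / (1 + f) := by
    filter_upwards [self_mem_nhdsWithin] with b hb
    have hb' : β₀ < b := mem_Ioi.1 hb
    have hb0 : 0 < b := lt_trans hβ₀ hb'
    have hGb : G b < α / (1 + f) := by
      have := G_strictAnti hF (mem_Ioi.2 hβ₀) (mem_Ioi.2 hb0) hb'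
      rwa [hGβ₀] at this
    exact ⟨hb0, (div_lt_div_iff₀ hα hf1).2 (by nlinarith [(lt_div_iff₀ hf1).1 hGb])⟩
  have t3 : Tendsto (fun b => φA α b) (𝓝[>] β₀) (𝓝 0) := by
    apply tendsto_of_tendsto_of_tendsto_of_le_of_le' tendsto_const_nhds
      (show Tendsto (fun b : ℝ => 1 - β₀ / b) _ (𝓝 0) by
        have h := Tendsto.const_sub (1:ℝ) hr'
        have h0 : (1:ℝ) - 1 = 0 := by norm_num
        rw [h0] at h
        exact h)
    · filter_upwards [hev2] with b hb
      exact le_of_lt (hφ α b hα hb.1 hb.2).1.1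
    · filter_upwards [hev2] with b hb
      exact (key_bounds hF hGinv hf hφ hα hb.1 hb.2).1
  have t4 : Tendsto (fun b => φB α b) (𝓝[>] β₀) (𝓝 0) := by
    apply tendsto_of_tendsto_of_tendsto_of_le_of_le'
      (show Tendsto (fun b : ℝ => 1 - (β₀ / b)⁻¹) _ (𝓝 0) by
        have h := Tendsto.const_sub (1:ℝ) hrinv'
        have h0 : (1:ℝ) - 1 = 0 := by norm_num
        rw [h0] at h
        exact h)
      tendsto_const_nhds
    · filter_upwards [hev2] with b hb
      exact (key_bounds hF hGinv hf hφ hα hb.1 hb.2).2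
    · filter_upwards [hev2] with b hb
      exact le_of_lt (hφ α b hα hb.1 hb.2).2.1
  exact ⟨t1, t2, t3, t4⟩
end

section
/- Let F be a pricing function with marginal-rate function G, let f>0 be the unit trading fee, and let α,β>0 satisfy G(β) ≥ α/(1+f). Then for every pair (d^A, d^B) with d^A ∈ (0,1), d^B < 1 and F(β(1−d^A), 1−d^B) = F(β, 1), one has αβ·d^A + (1+f)·d^B < 0; that is, acquiring any positive amount of asset A from the pool yields a strictly negative post-fee profit for an investor who values the exchange rate at α. -/
open Set Filter Topology

/-- Chain rule along a line, proved by hand from continuous partial derivatives. -/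
lemma PricingFunction.hasDerivAt_line {F Fx Fy : ℝ → ℝ → ℝ} {G G' : ℝ → ℝ}
    (hF : PricingFunction F Fx Fy G G') (a b p q t : ℝ)
    (hx : 0 < a + p * t) (hy : 0 < b + q * t) :
    HasDerivAt (fun s => F (a + p * s) (b + q * s))
      (p * Fx (a + p * t) (b + q * t) + q * Fy (a + p * t) (b + q * t)) t := by
  set X := a + p * t with hX
  set Y := b + q * t with hY
  have hφ : HasDerivAt (fun s => F X (b + q * s)) (q * Fy X Y) t := by
    have h1 : HasDerivAt (fun s : ℝ => b + q * s) q t := by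
      simpa using ((hasDerivAt_id t).const_mul q).const_add b
    have h2 := (hF.partialY X Y hx hy).comp t h1
    simpa [mul_comm, Function.comp_def] using h2
  rw [hasDerivAt_iff_isLittleO]
  have hsum : (fun s => F (a + p * s) (b + q * s) - F X Y -
        (s - t) • (p * Fx X Y + q * Fy X Y))
      = (fun s => (F (a + p * s) (b + q * s) - F X (b + q * s) - (s - t) * (p * Fx X Y)))
        + (fun s => F X (b + q * s) - F X Y - (s - t) * (q * Fy X Y)) := by
    funext s
    simp only [Pi.add_apply, smul_eq_mul]
    ring
  rw [hsum]
  have he2 : (fun s => F X (b + q * s) - F X Y - (s - t) * (q * Fy X Y))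
      =o[𝓝 t] fun s => s - t := by
    have h3 := hasDerivAt_iff_isLittleO.1 hφ
    simpa [smul_eq_mul] using h3
  refine Asymptotics.IsLittleO.add ?_ he2
  rw [Asymptotics.isLittleO_iff]
  intro ε hε
  set ε' := ε / (|p| + 1) with hε'def
  have hε' : 0 < ε' := div_pos hε (by positivity)
  have hopen : IsOpen ((Ioi (0:ℝ)) ×ˢ (Ioi (0:ℝ))) := isOpen_Ioi.prod isOpen_Ioi
  have hmemXY : (X, Y) ∈ (Ioi (0:ℝ)) ×ˢ (Ioi (0:ℝ)) := ⟨hx, hy⟩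
  have hcont : ContinuousAt (fun pr : ℝ × ℝ => Fx pr.1 pr.2) (X, Y) :=
    hF.contX.continuousAt (hopen.mem_nhds hmemXY)
  have h1 : ∀ᶠ pr : ℝ × ℝ in 𝓝 (X, Y),
      |Fx pr.1 pr.2 - Fx X Y| ≤ ε' ∧ pr ∈ (Ioi (0:ℝ)) ×ˢ (Ioi (0:ℝ)) := by
    filter_upwards [hcont (Metric.closedBall_mem_nhds _ hε'), hopen.mem_nhds hmemXY]
      with pr hb hm
    refine ⟨?_, hm⟩
    simpa [Real.dist_eq] using hb
  obtain ⟨δ, hδpos, hδ⟩ := Metric.eventually_nhds_iff_ball.1 h1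
  have hδ'pos : 0 < δ / (|p| + |q| + 1) := by positivity
  filter_upwards [Metric.ball_mem_nhds t hδ'pos] with s hs
  rw [Metric.mem_ball, Real.dist_eq] at hs
  have hst : |s - t| < δ / (|p| + |q| + 1) := hs
  have hstδ : (|p| + |q| + 1) * |s - t| < δ := by
    rw [← lt_div_iff₀' (by positivity)]
    exact hst
  -- all points on the horizontal segment are in the ball
  have hmem : ∀ x ∈ uIcc X (a + p * s), (x, b + q * s) ∈ Metric.ball (X, Y) δ := by
    intro x hxm
    rw [Metric.mem_ball, Prod.dist_eq, Real.dist_eq, Real.dist_eq]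
    have h4 : |x - X| ≤ |(a + p * s) - X| := abs_sub_left_of_mem_uIcc hxm
    have h5 : |(a + p * s) - X| = |p| * |s - t| := by
      rw [← abs_mul]; congr 1; rw [hX]; ring
    have h6 : |(b + q * s) - Y| = |q| * |s - t| := by
      rw [← abs_mul]; congr 1; rw [hY]; ring
    have habs : (0:ℝ) ≤ |s - t| := abs_nonneg _
    refine max_lt ?_ ?_
    · calc |x - X| ≤ |p| * |s - t| := h4.trans h5.le
        _ ≤ (|p| + |q| + 1) * |s - t| := by nlinarith [abs_nonneg q]
        _ < δ := hstδ
    · calc |(b + q * s) - Y| = |q| * |s - t| := h6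
        _ ≤ (|p| + |q| + 1) * |s - t| := by nlinarith [abs_nonneg p]
        _ < δ := hstδ
  set u : ℝ → ℝ := fun x => F x (b + q * s) - x * Fx X Y with hu
  have hder : ∀ x ∈ uIcc X (a + p * s),
      HasDerivWithinAt u (Fx x (b + q * s) - Fx X Y) (uIcc X (a + p * s)) x := by
    intro x hxm
    obtain ⟨hb, hm⟩ := hδ _ (hmem x hxm)
    have hx' : (0:ℝ) < x := hm.1
    have hy' : (0:ℝ) < b + q * s := hm.2
    have hd1 := hF.partialX x (b + q * s) hx' hy'
    have hd2 : HasDerivAt (fun x : ℝ => x * Fx X Y) (Fx X Y) x := by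
      simpa using (hasDerivAt_id x).mul_const (Fx X Y)
    exact (hd1.sub hd2).hasDerivWithinAt
  have hbound : ∀ x ∈ uIcc X (a + p * s), ‖Fx x (b + q * s) - Fx X Y‖ ≤ ε' := by
    intro x hxm
    obtain ⟨hb, _⟩ := hδ _ (hmem x hxm)
    simpa [Real.norm_eq_abs] using hb
  have hmvt := (convex_uIcc X (a + p * s)).norm_image_sub_le_of_norm_hasDerivWithin_le
    hder hbound left_mem_uIcc right_mem_uIcc
  have heq1 : u (a + p * s) - u X
      = F (a + p * s) (b + q * s) - F X (b + q * s) - (s - t) * (p * Fx X Y) := by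
    rw [hu, hX]; ring_nf
  have heq2 : ‖(a + p * s) - X‖ = |p| * |s - t| := by
    rw [Real.norm_eq_abs, ← abs_mul]; congr 1; rw [hX]; ring
  rw [heq1, heq2] at hmvt
  calc ‖F (a + p * s) (b + q * s) - F X (b + q * s) - (s - t) * (p * Fx X Y)‖
      ≤ ε' * (|p| * |s - t|) := hmvt
    _ ≤ ε * ‖s - t‖ := by
        rw [Real.norm_eq_abs]
        have : ε' * |p| ≤ ε := by
          rw [hε'def, div_mul_eq_mul_div, div_le_iff₀ (by positivity)]
          nlinarith [abs_nonneg p, abs_nonneg (s - t), hε.le]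
        nlinarith [abs_nonneg (s - t), hε'.le, abs_nonneg p]

/-- If `G(β) ≥ α/(1+f)`, then acquiring any positive amount of asset A yields a
strictly negative post-fee profit: for any `dᴬ ∈ (0,1)`, `dᴮ < 1` with
`F(β(1−dᴬ), 1−dᴮ) = F(β,1)`, one has `αβ·dᴬ + (1+f)·dᴮ < 0`. -/
theorem stmt9 (F Fx Fy : ℝ → ℝ → ℝ) (G G' : ℝ → ℝ)
    (hF : PricingFunction F Fx Fy G G')
    (f : ℝ) (hf : 0 < f) (α β : ℝ) (hα : 0 < α) (hβ : 0 < β)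
    (hreg : α / (1 + f) ≤ G β) :
    ∀ dA dB : ℝ, dA ∈ Ioo (0:ℝ) 1 → dB < 1 →
      F (β * (1 - dA)) (1 - dB) = F β 1 →
      α * β * dA + (1 + f) * dB < 0 := by
  intro dA dB hdA hdB heq
  obtain ⟨hdA0, hdA1⟩ := hdA
  have hf1 : (0:ℝ) < 1 + f := by linarith
  set c := α / (1 + f) with hcdef
  have hc : 0 < c := div_pos hα hf1
  set T := β * dA with hTdef
  have hT : 0 < T := mul_pos hβ hdA0
  set x₁ := β * (1 - dA) with hx₁def
  have hx₁ : 0 < x₁ := mul_pos hβ (by linarith)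
  have hbt : β + (-1) * T = x₁ := by rw [hTdef, hx₁def]; ring
  set y₁ := 1 - dB with hy₁def
  have hy₁ : 0 < y₁ := by rw [hy₁def]; linarith
  -- G is strictly decreasing on (0, ∞)
  have hGanti : StrictAntiOn G (Ioi 0) := by
    apply strictAntiOn_of_deriv_neg (convex_Ioi 0)
    · exact fun z hz => (hF.derivG z hz).continuousAt.continuousWithinAt
    · intro z hz
      rw [interior_Ioi] at hz
      rw [(hF.derivG z hz).deriv]
      exact hF.negG' z hz
  -- derivative of F along the line s ↦ (β - s, 1 + c s)
  have hg : ∀ t ∈ Icc (0:ℝ) T,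
      HasDerivAt (fun s => F (β + (-1) * s) (1 + c * s))
        ((-1) * Fx (β + (-1) * t) (1 + c * t) + c * Fy (β + (-1) * t) (1 + c * t)) t := by
    intro t ht
    obtain ⟨ht0, htT⟩ := ht
    refine hF.hasDerivAt_line β 1 (-1) c t ?_ ?_
    · have : x₁ ≤ β + (-1) * t := by rw [← hbt]; linarith
      linarith
    · nlinarith
  -- F strictly decreases along the line
  have hanti : StrictAntiOn (fun s => F (β + (-1) * s) (1 + c * s)) (Icc 0 T) := by
    apply strictAntiOn_of_deriv_neg (convex_Icc 0 T)
    · exact fun t ht => ((hg t ht).continuousAt).continuousWithinAt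
    · intro t ht
      rw [interior_Icc] at ht
      obtain ⟨ht0, htT⟩ := ht
      rw [(hg t ⟨ht0.le, htT.le⟩).deriv]
      set X := β + (-1) * t with hXdef
      set Y := 1 + c * t with hYdef
      have hX : 0 < X := by
        have : x₁ ≤ X := by rw [hXdef, ← hbt]; linarith
        linarith
      have hY1 : (1:ℝ) < Y := by rw [hYdef]; nlinarith
      have hY : 0 < Y := by linarith
      have hXβ : X < β := by rw [hXdef]; linarith
      have hZpos : 0 < X / Y := div_pos hX hY
      have hZβ : X / Y < β := lt_of_le_of_lt (div_le_self hX.le hY1.le) hXβ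
      have hGβ : G β < G (X / Y) := hGanti (mem_Ioi.2 hZpos) (mem_Ioi.2 (by linarith : (0:ℝ) < β)) hZβ
      have hcG : c < G (X / Y) := lt_of_le_of_lt hreg hGβ
      have hFy := hF.posY X Y hX hY
      have hratio := hF.ratio X Y hX hY
      have hFx : Fx X Y = G (X / Y) * Fy X Y := by
        field_simp at hratio
        linarith [hratio]
      nlinarith [mul_lt_mul_of_pos_right hcG hFy]
  have hlt : F (β + (-1) * T) (1 + c * T) < F (β + (-1) * 0) (1 + c * 0) :=
    hanti (left_mem_Icc.2 hT.le) (right_mem_Icc.2 hT.le) hT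
  have hlt' : F x₁ (1 + c * T) < F β 1 := by
    rw [hbt] at hlt
    simpa using hlt
  -- strict monotonicity of F in its second argument
  have hmono : StrictMonoOn (fun y => F x₁ y) (Ioi 0) := by
    apply strictMonoOn_of_deriv_pos (convex_Ioi 0)
    · exact fun y hy => (hF.partialY x₁ y hx₁ hy).continuousAt.continuousWithinAt
    · intro y hy
      rw [interior_Ioi] at hy
      rw [(hF.partialY x₁ y hx₁ hy).deriv]
      exact hF.posY x₁ y hx₁ hy
  have hys : 1 + c * T < y₁ := by
    by_contra h
    push_neg at h
    have h2 : F x₁ y₁ ≤ F x₁ (1 + c * T) :=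
      hmono.monotoneOn (mem_Ioi.2 hy₁) (mem_Ioi.2 (by nlinarith)) h
    have h3 : F x₁ y₁ = F β 1 := by rw [hx₁def, hy₁def] at *; exact heq
    linarith
  -- conclude
  have hkey : (1 + f) * (c * T) < (1 + f) * (y₁ - 1) := by
    apply mul_lt_mul_of_pos_left _ hf1
    linarith
  have hca : (1 + f) * c = α := by
    rw [hcdef]
    field_simp
  have : α * T < (1 + f) * (y₁ - 1) := by
    calc α * T = (1 + f) * c * T := by rw [hca]
      _ = (1 + f) * (c * T) := by ring
      _ < (1 + f) * (y₁ - 1) := hkey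
  rw [hTdef, hy₁def] at this
  nlinarith
end
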